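/- arXiv:1411.1742 — 2 statements merged into one kernel-verified Lean document; each statement's English description precedes it below -/
import Mathlib

section
/- Let n ≥ 3 and 1 ≤ k ≤ n−2 be integers and let c : ℝⁿ → ℝ² be the index-k cusp map. The critical set of c equals the range of the smooth embedding t ↦ (t², t, 0, …, 0) from ℝ to ℝⁿ; in particular, the critical set of c is a 1-dimensional smooth submanifold of ℝⁿ. -/
namespace Stmt10Aux

open ContinuousLinearMap

/-- The cusp map written explicitly. -/
def F (n k : ℕ) (hn : 3 ≤ n) : (Fin n → ℝ) → ℝ × ℝ := fun x =>
  (x ⟨0, by omega⟩,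
    (x ⟨1, by omega⟩) ^ 3 - 3 * x ⟨0, by omega⟩ * x ⟨1, by omega⟩ +
      ∑ i : Fin n, if (i : ℕ) ≤ 1 then 0
        else if (i : ℕ) ≤ k + 1 then -(x i) ^ 2 else (x i) ^ 2)

lemma keyD (n k : ℕ) (hn : 3 ≤ n) (x : Fin n → ℝ) :
    ∃ D : (Fin n → ℝ) →L[ℝ] ℝ × ℝ,
      HasFDerivAt (F n k hn) D x ∧
      ∀ v : Fin n → ℝ, D v = (v ⟨0, by omega⟩,
        3 * x ⟨1, by omega⟩ ^ 2 * v ⟨1, by omega⟩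
          - (3 * x ⟨0, by omega⟩ * v ⟨1, by omega⟩ + 3 * x ⟨1, by omega⟩ * v ⟨0, by omega⟩)
          + ∑ i : Fin n, (if (i : ℕ) ≤ 1 then 0
              else if (i : ℕ) ≤ k + 1 then -(2 * x i * v i) else 2 * x i * v i)) := by
  set i0 : Fin n := ⟨0, by omega⟩
  set i1 : Fin n := ⟨1, by omega⟩
  have ha : HasFDerivAt (fun y : Fin n → ℝ => (y i1) ^ 3)
      ((((3:ℕ):ℝ) * x i1 ^ (3-1)) • (proj i1 : (Fin n → ℝ) →L[ℝ] ℝ)) x :=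
    (hasDerivAt_pow 3 (x i1)).comp_hasFDerivAt (f := fun y : Fin n → ℝ => y i1) x
      (hasFDerivAt_apply i1 x)
  have hb : HasFDerivAt (fun y : Fin n → ℝ => 3 * y i0 * y i1)
      ((3 * x i0) • (proj i1 : (Fin n → ℝ) →L[ℝ] ℝ) +
        x i1 • ((3:ℝ) • (proj i0 : (Fin n → ℝ) →L[ℝ] ℝ))) x :=
    ((hasFDerivAt_apply i0 x).const_mul 3).mul (hasFDerivAt_apply i1 x)
  have hs : HasFDerivAt (fun y : Fin n → ℝ => ∑ i : Fin n, if (i : ℕ) ≤ 1 then (0:ℝ)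
        else if (i : ℕ) ≤ k + 1 then -(y i) ^ 2 else (y i) ^ 2)
      (∑ i : Fin n, if (i : ℕ) ≤ 1 then (0 : (Fin n → ℝ) →L[ℝ] ℝ)
        else if (i : ℕ) ≤ k + 1 then
          -((((2:ℕ):ℝ) * x i ^ (2-1)) • (proj i : (Fin n → ℝ) →L[ℝ] ℝ))
        else (((2:ℕ):ℝ) * x i ^ (2-1)) • (proj i : (Fin n → ℝ) →L[ℝ] ℝ)) x := by
    apply HasFDerivAt.fun_sum
    intro i _
    split_ifs with h1 h2
    · exact hasFDerivAt_const 0 x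
    · exact ((hasDerivAt_pow 2 (x i)).comp_hasFDerivAt (f := fun y : Fin n → ℝ => y i) x
        (hasFDerivAt_apply i x)).neg
    · exact (hasDerivAt_pow 2 (x i)).comp_hasFDerivAt (f := fun y : Fin n → ℝ => y i) x
        (hasFDerivAt_apply i x)
  refine ⟨(proj i0).prod _, HasFDerivAt.prodMk (hasFDerivAt_apply i0 x) ((ha.sub hb).add hs), ?_⟩
  intro v
  simp only [ContinuousLinearMap.prod_apply, ContinuousLinearMap.add_apply,
    ContinuousLinearMap.sub_apply, ContinuousLinearMap.smul_apply, ContinuousLinearMap.coe_smul',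
    ContinuousLinearMap.proj_apply, ContinuousLinearMap.sum_apply, Pi.smul_apply, smul_eq_mul]
  refine Prod.ext rfl ?_
  simp only
  congr 1
  · push_cast; ring
  · refine Finset.sum_congr rfl fun i _ => ?_
    split_ifs with h1 h2
    · simp
    · simp only [ContinuousLinearMap.neg_apply, ContinuousLinearMap.smul_apply,
        ContinuousLinearMap.proj_apply, smul_eq_mul]
      push_cast; ring
    · simp only [ContinuousLinearMap.smul_apply, ContinuousLinearMap.proj_apply, smul_eq_mul]
      push_cast; ring

lemma crit_iff (n k : ℕ) (hn : 3 ≤ n) (x : Fin n → ℝ) :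
    ¬ Function.Surjective (fderiv ℝ (F n k hn) x) ↔
      (x ⟨0, by omega⟩ = x ⟨1, by omega⟩ ^ 2 ∧ ∀ i : Fin n, 2 ≤ (i : ℕ) → x i = 0) := by
  classical
  obtain ⟨D, hD, hDv⟩ := keyD n k hn x
  rw [hD.fderiv]
  set i0 : Fin n := ⟨0, by omega⟩
  set i1 : Fin n := ⟨1, by omega⟩
  have hi01 : i1 ≠ i0 := by simp [i0, i1, Fin.ext_iff]
  constructor
  · intro hns
    by_contra hP
    apply hns
    push_neg at hP
    by_cases hA : x i0 = x i1 ^ 2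
    · obtain ⟨j, hj2, hjne⟩ := hP hA
      have hji0 : j ≠ i0 := by simp [i0, Fin.ext_iff]; omega
      have hji1 : j ≠ i1 := by simp [i1, Fin.ext_iff]; omega
      set sj : ℝ := if (j : ℕ) ≤ k + 1 then -(2 * x j) else 2 * x j with hsj
      have hsj0 : sj ≠ 0 := by
        rw [hsj]; split_ifs
        · simp only [neg_ne_zero]; positivity
        · positivity
      rintro ⟨a, b⟩
      have h1j : i1 ≠ j := fun h => hji1 h.symm
      refine ⟨fun i => if i = i0 then a else if i = j then (b + 3 * x i1 * a) / sj else 0, ?_⟩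
      rw [hDv]
      have hsum : (∑ i : Fin n, if (i : ℕ) ≤ 1 then (0:ℝ)
          else if (i : ℕ) ≤ k + 1 then
            -(2 * x i * (if i = i0 then a else if i = j then (b + 3 * x i1 * a) / sj else 0))
          else 2 * x i * (if i = i0 then a else if i = j then (b + 3 * x i1 * a) / sj else 0))
          = sj * ((b + 3 * x i1 * a) / sj) := by
        rw [Finset.sum_eq_single_of_mem j (Finset.mem_univ j)]
        · rw [if_neg (show ¬((j : ℕ) ≤ 1) by omega), if_neg hji0, if_pos rfl, hsj]
          split_ifs <;> ring
        · intro i _ hij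
          by_cases hile : (i : ℕ) ≤ 1
          · simp [hile]
          · have hii0 : i ≠ i0 := by simp [i0, Fin.ext_iff]; omega
            simp [hile, hii0, hij]
      rw [hsum, mul_div_cancel₀ _ hsj0]
      refine Prod.ext (by simp) ?_
      simp only [hi01, h1j]
      simp
    · rintro ⟨a, b⟩
      have hs0 : 3 * x i1 ^ 2 - 3 * x i0 ≠ 0 := by
        intro h
        apply hA
        nlinarith [h]
      refine ⟨fun i => if i = i0 then a
        else if i = i1 then (b + 3 * x i1 * a) / (3 * x i1 ^ 2 - 3 * x i0) else 0, ?_⟩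
      rw [hDv]
      have hsum : (∑ i : Fin n, if (i : ℕ) ≤ 1 then (0:ℝ)
          else if (i : ℕ) ≤ k + 1 then
            -(2 * x i * (if i = i0 then a
              else if i = i1 then (b + 3 * x i1 * a) / (3 * x i1 ^ 2 - 3 * x i0) else 0))
          else 2 * x i * (if i = i0 then a
              else if i = i1 then (b + 3 * x i1 * a) / (3 * x i1 ^ 2 - 3 * x i0) else 0))
          = 0 := by
        apply Finset.sum_eq_zero
        intro i _
        by_cases hile : (i : ℕ) ≤ 1
        · simp [hile]
        · have hii0 : i ≠ i0 := by simp [i0, Fin.ext_iff]; omega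
          have hii1 : i ≠ i1 := by simp [i1, Fin.ext_iff]; omega
          simp [hile, hii0, hii1]
      rw [hsum]
      refine Prod.ext (by simp) ?_
      simp only [hi01]
      simp
      field_simp
      ring
  · rintro ⟨h0, h2⟩ hsurj
    obtain ⟨v, hv⟩ := hsurj (0, 1)
    rw [hDv] at hv
    have hv0 : v i0 = 0 := congrArg Prod.fst hv
    have hv2 : 3 * x i1 ^ 2 * v i1 - (3 * x i0 * v i1 + 3 * x i1 * v i0)
        + ∑ i : Fin n, (if (i : ℕ) ≤ 1 then 0
            else if (i : ℕ) ≤ k + 1 then -(2 * x i * v i) else 2 * x i * v i) = 1 :=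
      congrArg Prod.snd hv
    rw [Finset.sum_eq_zero] at hv2
    · rw [h0, hv0] at hv2
      nlinarith [hv2]
    · intro i _
      by_cases hile : (i : ℕ) ≤ 1
      · simp [hile]
      · have := h2 i (by omega)
        simp [hile, this]

/-- The straightening chart. -/
def Φ (n : ℕ) (hn : 3 ≤ n) : (Fin n → ℝ) → (Fin n → ℝ) := fun y i =>
  if (i : ℕ) = 0 then y ⟨1, by omega⟩
  else if (i : ℕ) = 1 then y ⟨0, by omega⟩ - (y ⟨1, by omega⟩) ^ 2
  else y i

/-- Inverse of the straightening chart. -/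
def Ψ (n : ℕ) (hn : 3 ≤ n) : (Fin n → ℝ) → (Fin n → ℝ) := fun z i =>
  if (i : ℕ) = 0 then z ⟨1, by omega⟩ + (z ⟨0, by omega⟩) ^ 2
  else if (i : ℕ) = 1 then z ⟨0, by omega⟩
  else z i

lemma contDiffΦ (n : ℕ) (hn : 3 ≤ n) : ContDiff ℝ (⊤ : ℕ∞) (Φ n hn) := by
  apply contDiff_pi.2
  intro i
  unfold Φ
  split_ifs
  · exact contDiff_apply ℝ ℝ _
  · exact (contDiff_apply ℝ ℝ _).sub ((contDiff_apply ℝ ℝ _).pow 2)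
  · exact contDiff_apply ℝ ℝ _

lemma contDiffΨ (n : ℕ) (hn : 3 ≤ n) : ContDiff ℝ (⊤ : ℕ∞) (Ψ n hn) := by
  apply contDiff_pi.2
  intro i
  unfold Ψ
  split_ifs
  · exact (contDiff_apply ℝ ℝ _).add ((contDiff_apply ℝ ℝ _).pow 2)
  · exact contDiff_apply ℝ ℝ _
  · exact contDiff_apply ℝ ℝ _

lemma leftInvΦ (n : ℕ) (hn : 3 ≤ n) (y : Fin n → ℝ) : Ψ n hn (Φ n hn y) = y := by
  have hn0 : 0 < n := by omega
  have hn1 : 1 < n := by omega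
  funext i
  unfold Φ Ψ
  by_cases h0 : (i : ℕ) = 0
  · have hi : i = ⟨0, hn0⟩ := Fin.ext h0
    subst hi
    norm_num
  · by_cases h1 : (i : ℕ) = 1
    · have hi : i = ⟨1, hn1⟩ := Fin.ext h1
      subst hi
      norm_num
    · simp [h0, h1]

lemma rightInvΦ (n : ℕ) (hn : 3 ≤ n) (z : Fin n → ℝ) : Φ n hn (Ψ n hn z) = z := by
  have hn0 : 0 < n := by omega
  have hn1 : 1 < n := by omega
  funext i
  unfold Φ Ψ
  by_cases h0 : (i : ℕ) = 0
  · have hi : i = ⟨0, hn0⟩ := Fin.ext h0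
    subst hi
    norm_num
  · by_cases h1 : (i : ℕ) = 1
    · have hi : i = ⟨1, hn1⟩ := Fin.ext h1
      subst hi
      norm_num
    · simp [h0, h1]

end Stmt10Aux

/-- The critical set of the index-`k` cusp map `c : ℝⁿ → ℝ²` equals the range
of the smooth embedding `t ↦ (t², t, 0, …, 0)`; in particular it is a 1-dimensional smooth
submanifold of `ℝⁿ` (expressed by straightening charts). -/
theorem stmt10 (n k : ℕ) (hn : 3 ≤ n) (hk1 : 1 ≤ k) (hk2 : k ≤ n - 2)
    (c : (Fin n → ℝ) → ℝ × ℝ)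
    (hc : ∀ x : Fin n → ℝ, c x =
      (x ⟨0, by omega⟩,
        (x ⟨1, by omega⟩) ^ 3 - 3 * x ⟨0, by omega⟩ * x ⟨1, by omega⟩ +
          ∑ i : Fin n, if (i : ℕ) ≤ 1 then 0
            else if (i : ℕ) ≤ k + 1 then -(x i) ^ 2 else (x i) ^ 2))
    (C : Set (Fin n → ℝ))
    (hC : C = {x : Fin n → ℝ | ¬ Function.Surjective (fderiv ℝ c x)})
    (e : ℝ → (Fin n → ℝ))
    (he : ∀ t : ℝ, e t = fun i : Fin n =>
      if (i : ℕ) = 0 then t ^ 2 else if (i : ℕ) = 1 then t else 0) :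
    -- the critical set is the range of `e`, which is a smooth embedding
    C = Set.range e ∧ ContDiff ℝ (⊤ : ℕ∞) e ∧ Topology.IsEmbedding e ∧
    -- `C` is a 1-dimensional smooth submanifold: near each of its points there is a smooth
    -- chart of `ℝⁿ` straightening `C` to a 1-dimensional coordinate axis
    (∀ x ∈ C, ∃ (U V : Set (Fin n → ℝ)) (φ ψ : (Fin n → ℝ) → (Fin n → ℝ)),
      IsOpen U ∧ x ∈ U ∧ IsOpen V ∧
      ContDiffOn ℝ (⊤ : ℕ∞) φ U ∧ ContDiffOn ℝ (⊤ : ℕ∞) ψ V ∧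
      Set.MapsTo φ U V ∧ Set.MapsTo ψ V U ∧ Set.InvOn ψ φ U V ∧
      φ '' (U ∩ C) = V ∩ {y : Fin n → ℝ | ∀ i : Fin n, (i : ℕ) ≠ 0 → y i = 0}) := by
  classical
  have hcf : c = Stmt10Aux.F n k hn := funext hc
  have hcrit : ∀ x : Fin n → ℝ, x ∈ C ↔
      (x ⟨0, by omega⟩ = x ⟨1, by omega⟩ ^ 2 ∧ ∀ i : Fin n, 2 ≤ (i : ℕ) → x i = 0) := by
    intro x
    rw [hC, Set.mem_setOf_eq, hcf]
    exact Stmt10Aux.crit_iff n k hn x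
  have hrange : C = Set.range e := by
    ext x
    rw [hcrit]
    constructor
    · rintro ⟨h0, h2⟩
      refine ⟨x ⟨1, by omega⟩, ?_⟩
      rw [he]
      have hn0 : 0 < n := by omega
      have hn1 : 1 < n := by omega
      funext i
      by_cases hi0 : (i : ℕ) = 0
      · have hi : i = ⟨0, hn0⟩ := Fin.ext hi0
        subst hi
        simpa using h0.symm
      · by_cases hi1 : (i : ℕ) = 1
        · have hi : i = ⟨1, hn1⟩ := Fin.ext hi1
          subst hi
          simp
        · simp only [hi0, hi1, if_false]
          exact (h2 i (by omega)).symm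
    · rintro ⟨t, rfl⟩
      rw [he]
      refine ⟨by norm_num, fun i hi => ?_⟩
      have h0 : ¬ ((i : ℕ) = 0) := by omega
      have h1 : ¬ ((i : ℕ) = 1) := by omega
      simp [h0, h1]
  have hef : e = fun t => fun i : Fin n =>
      if (i : ℕ) = 0 then t ^ 2 else if (i : ℕ) = 1 then t else 0 := funext he
  have hsmooth : ContDiff ℝ (⊤ : ℕ∞) e := by
    rw [hef]
    apply contDiff_pi.2
    intro i
    split_ifs
    · exact contDiff_id.pow 2
    · exact contDiff_id
    · exact contDiff_const
  have hemb : Topology.IsEmbedding e := by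
    apply Function.LeftInverse.isEmbedding
      (f := fun y : Fin n → ℝ => y ⟨1, by omega⟩) (g := e)
    · intro t
      rw [he]
      norm_num
    · exact continuous_apply _
    · exact hsmooth.continuous
  refine ⟨hrange, hsmooth, hemb, ?_⟩
  intro x hx
  refine ⟨Set.univ, Set.univ, Stmt10Aux.Φ n hn, Stmt10Aux.Ψ n hn, isOpen_univ, trivial,
    isOpen_univ, (Stmt10Aux.contDiffΦ n hn).contDiffOn, (Stmt10Aux.contDiffΨ n hn).contDiffOn,
    Set.mapsTo_univ _ _, Set.mapsTo_univ _ _,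
    ⟨fun y _ => Stmt10Aux.leftInvΦ n hn y, fun z _ => Stmt10Aux.rightInvΦ n hn z⟩, ?_⟩
  rw [Set.univ_inter, Set.univ_inter]
  ext z
  simp only [Set.mem_image, Set.mem_setOf_eq]
  constructor
  · rintro ⟨y, hyC, rfl⟩
    rw [hcrit] at hyC
    obtain ⟨h0, h2⟩ := hyC
    intro i hi
    unfold Stmt10Aux.Φ
    by_cases h1 : (i : ℕ) = 1
    · rw [if_neg hi, if_pos h1, h0]
      ring
    · rw [if_neg hi, if_neg h1]
      exact h2 i (by omega)
  · intro hz
    refine ⟨Stmt10Aux.Ψ n hn z, ?_, Stmt10Aux.rightInvΦ n hn z⟩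
    rw [hcrit]
    have hz1 : z ⟨1, by omega⟩ = 0 := hz _ (by norm_num)
    constructor
    · unfold Stmt10Aux.Ψ
      norm_num [hz1]
    · intro i hi
      unfold Stmt10Aux.Ψ
      have h0 : ¬ ((i : ℕ) = 0) := by omega
      have h1 : ¬ ((i : ℕ) = 1) := by omega
      simp only [h0, h1, if_false]
      exact hz i (by omega)
end

section
/- Let n ≥ 3 and 1 ≤ k ≤ n−2 be integers, and for a ∈ ℝ define g_a : ℝ^{n−1} → ℝ by g_a(x₂,…,xₙ) = x₂³ − 3a x₂ − ∑_{i=3}^{k+2} x_i² + ∑_{i=k+3}^{n} x_i² (the second coordinate of the cusp map restricted to the slice x₁ = a). Then: if a < 0, g_a has no critical points; if a = 0, g_a has exactly one critical point, namely 0, and the second derivative (Hessian) of g_a at 0 is degenerate; if a > 0, g_a has exactly two critical points, namely (√a, 0, …, 0) and (−√a, 0, …, 0), both of which are nondegenerate (the Hessian of g_a at each is a nondegenerate bilinear form), with critical values −2a√a and 2a√a respectively. -/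
open Real Finset

namespace S14

variable {m : ℕ}

noncomputable def F (a : ℝ) (k : ℕ) (j : ℕ) (t : ℝ) : ℝ :=
  if j = 0 then t ^ 3 - 3 * a * t else if j ≤ k then -t ^ 2 else t ^ 2

noncomputable def F' (a : ℝ) (k : ℕ) (j : ℕ) (t : ℝ) : ℝ :=
  if j = 0 then 3 * t ^ 2 - 3 * a else if j ≤ k then -(2 * t) else 2 * t

lemma hasDerivAt_F (a : ℝ) (k j : ℕ) (t : ℝ) : HasDerivAt (F a k j) (F' a k j t) t := by
  unfold F F'
  by_cases hj : j = 0
  · simp only [hj, if_true]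
    have h := (hasDerivAt_pow 3 t).sub ((hasDerivAt_id t).const_mul (3 * a))
    refine h.congr_deriv ?_
    push_cast; ring
  · by_cases hk : j ≤ k
    · simp only [hj, hk, if_false, if_true]
      have h := (hasDerivAt_pow 2 t).neg
      refine h.congr_deriv ?_
      push_cast; ring
    · simp only [hj, hk, if_false]
      have h := hasDerivAt_pow 2 t
      refine h.congr_deriv ?_
      push_cast; ring

noncomputable def proj (j : Fin m) : (Fin m → ℝ) →L[ℝ] ℝ := ContinuousLinearMap.proj j

noncomputable def D (a : ℝ) (k : ℕ) (y : Fin m → ℝ) : (Fin m → ℝ) →L[ℝ] ℝ :=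
  ∑ j : Fin m, F' a k (j : ℕ) (y j) • proj j

lemma hasFDerivAt_sumF (a : ℝ) (k : ℕ) (y : Fin m → ℝ) :
    HasFDerivAt (fun z : Fin m → ℝ => ∑ j : Fin m, F a k (j : ℕ) (z j)) (D a k y) y := by
  apply HasFDerivAt.fun_sum
  intro j _
  exact (hasDerivAt_F a k (j : ℕ) (y j)).comp_hasFDerivAt y (hasFDerivAt_apply (𝕜 := ℝ) j y)

lemma D_apply (a : ℝ) (k : ℕ) (y u : Fin m → ℝ) :
    D a k y u = ∑ j : Fin m, F' a k (j : ℕ) (y j) * u j := by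
  simp [D, proj, ContinuousLinearMap.sum_apply]

lemma D_single (a : ℝ) (k : ℕ) (y : Fin m → ℝ) (i : Fin m) :
    D a k y (Pi.single i 1) = F' a k (i : ℕ) (y i) := by
  rw [D_apply]
  rw [Finset.sum_eq_single i]
  · simp
  · intro b _ hb; simp [Pi.single_apply, hb]
  · simp

noncomputable def c2 (a : ℝ) (k : ℕ) (p : Fin m → ℝ) (j : Fin m) : ℝ :=
  if (j : ℕ) = 0 then 6 * p j else if (j : ℕ) ≤ k then -2 else 2

noncomputable def B (a : ℝ) (k : ℕ) (p : Fin m → ℝ) :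
    (Fin m → ℝ) →L[ℝ] ((Fin m → ℝ) →L[ℝ] ℝ) :=
  ∑ j, (c2 a k p j • proj j).smulRight (proj j)

lemma hasFDerivAt_D (a : ℝ) (k : ℕ) (p : Fin m → ℝ) :
    HasFDerivAt (D a k) (B a k p) p := by
  apply HasFDerivAt.fun_sum
  intro j _
  have hc : HasFDerivAt (fun y : Fin m → ℝ => F' a k (j : ℕ) (y j))
      (c2 a k p j • proj j) p := by
    have hd : HasDerivAt (F' a k (j : ℕ)) (c2 a k p j) (p j) := by
      unfold F' c2
      by_cases hj : (j : ℕ) = 0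
      · simp only [hj, if_true]
        have h := ((hasDerivAt_pow 2 (p j)).const_mul 3).sub_const (3 * a)
        refine h.congr_deriv ?_
        push_cast; ring
      · by_cases hk : (j : ℕ) ≤ k
        · simp only [hj, hk, if_false, if_true]
          have h := ((hasDerivAt_id (p j)).const_mul 2).neg
          refine h.congr_deriv ?_; ring
        · simp only [hj, hk, if_false]
          have h := (hasDerivAt_id (p j)).const_mul 2
          refine h.congr_deriv ?_; ring
    exact hd.comp_hasFDerivAt p (hasFDerivAt_apply (𝕜 := ℝ) j p)
  have h := HasFDerivAt.fun_smul (𝕜 := ℝ) hc (hasFDerivAt_const (proj j) p)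
  simpa using h

lemma B_apply (a : ℝ) (k : ℕ) (p v u : Fin m → ℝ) :
    B a k p v u = ∑ j, c2 a k p j * v j * u j := by
  simp [B, proj, ContinuousLinearMap.sum_apply, mul_assoc]

lemma B_single (a : ℝ) (k : ℕ) (p v : Fin m → ℝ) (i : Fin m) :
    B a k p v (Pi.single i 1) = c2 a k p i * v i := by
  rw [B_apply]
  rw [Finset.sum_eq_single i]
  · simp
  · intro b _ hb; simp [Pi.single_apply, hb]
  · simp


end S14


open S14 Real

/-- For `n ≥ 3`, `1 ≤ k ≤ n-2` and `a ∈ ℝ`, let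
`g a : ℝ^{n-1} → ℝ`, `g a (x₂,…,xₙ) = x₂³ - 3ax₂ - ∑_{i=3}^{k+2} xᵢ² + ∑_{i=k+3}^{n} xᵢ²`
(the second coordinate of the cusp map on the slice `x₁ = a`; coordinates are 0-indexed,
mathematical `xᵢ` is `y ⟨i-2,_⟩`). Then: for `a < 0`, `g a` has no critical points; for
`a = 0`, it has the single critical point `0`, with degenerate Hessian there; for `a > 0`,
it has exactly the two critical points `(±√a, 0, …, 0)`, both nondegenerate, with critical
values `∓2a√a`. -/
theorem stmt14 (n k : ℕ) (hn : 3 ≤ n) (hk1 : 1 ≤ k) (hk2 : k ≤ n - 2)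
    (g : ℝ → (Fin (n - 1) → ℝ) → ℝ)
    (hg : ∀ (a : ℝ) (y : Fin (n - 1) → ℝ), g a y =
      (y ⟨0, by omega⟩) ^ 3 - 3 * a * y ⟨0, by omega⟩ +
        ∑ j : Fin (n - 1), if (j : ℕ) = 0 then 0
          else if (j : ℕ) ≤ k then -(y j) ^ 2 else (y j) ^ 2) :
    -- for `a < 0`: no critical points
    (∀ a : ℝ, a < 0 → ∀ y : Fin (n - 1) → ℝ, fderiv ℝ (g a) y ≠ 0) ∧
    -- for `a = 0`: exactly one critical point, `0`, with degenerate Hessian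
    ({y : Fin (n - 1) → ℝ | fderiv ℝ (g 0) y = 0} = {0} ∧
      ∃ v : Fin (n - 1) → ℝ, v ≠ 0 ∧ ∀ u : Fin (n - 1) → ℝ,
        fderiv ℝ (fderiv ℝ (g 0)) 0 v u = 0) ∧
    -- for `a > 0`: exactly two critical points `(±√a,0,…,0)`, both nondegenerate,
    -- with critical values `∓2a√a`
    (∀ a : ℝ, 0 < a →
      ∀ pPlus pMinus : Fin (n - 1) → ℝ,
        pPlus = (fun j : Fin (n - 1) => if (j : ℕ) = 0 then Real.sqrt a else 0) →
        pMinus = (fun j : Fin (n - 1) => if (j : ℕ) = 0 then -Real.sqrt a else 0) →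
        {y : Fin (n - 1) → ℝ | fderiv ℝ (g a) y = 0} = {pPlus, pMinus} ∧
        (∀ v : Fin (n - 1) → ℝ,
          (∀ u : Fin (n - 1) → ℝ, fderiv ℝ (fderiv ℝ (g a)) pPlus v u = 0) → v = 0) ∧
        (∀ v : Fin (n - 1) → ℝ,
          (∀ u : Fin (n - 1) → ℝ, fderiv ℝ (fderiv ℝ (g a)) pMinus v u = 0) → v = 0) ∧
        g a pPlus = -2 * a * Real.sqrt a ∧ g a pMinus = 2 * a * Real.sqrt a) := by
  have h0n : 0 < n - 1 := by omega
  set i0 : Fin (n - 1) := ⟨0, h0n⟩ with hi0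
  -- rewrite g as a sum
  have hgeq : ∀ (a : ℝ) (y : Fin (n - 1) → ℝ), g a y = ∑ j : Fin (n - 1), F a k (j : ℕ) (y j) := by
    intro a y
    rw [hg]
    have hsplit : ∀ j : Fin (n - 1),
        F a k (j : ℕ) (y j)
          = (if (j : ℕ) = 0 then (y j) ^ 3 - 3 * a * y j else 0)
            + (if (j : ℕ) = 0 then 0 else if (j : ℕ) ≤ k then -(y j) ^ 2 else (y j) ^ 2) := by
      intro j
      unfold F
      by_cases h : (j : ℕ) = 0 <;> simp [h]
    rw [Finset.sum_congr rfl (fun j _ => hsplit j), Finset.sum_add_distrib]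
    congr 1
    rw [Finset.sum_eq_single i0]
    · simp [hi0]
    · intro b _ hb
      have : (b : ℕ) ≠ 0 := fun h => hb (Fin.ext h)
      simp [this]
    · simp
  -- first derivative
  have hfd : ∀ (a : ℝ) (y : Fin (n - 1) → ℝ), fderiv ℝ (g a) y = D a k y := by
    intro a y
    have h1 : g a = fun z : Fin (n - 1) → ℝ => ∑ j : Fin (n - 1), F a k (j : ℕ) (z j) :=
      funext (hgeq a)
    rw [h1]
    exact (hasFDerivAt_sumF a k y).fderiv
  -- second derivative
  have hsnd : ∀ (a : ℝ) (p : Fin (n - 1) → ℝ), fderiv ℝ (fderiv ℝ (g a)) p = B a k p := by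
    intro a p
    have h1 : fderiv ℝ (g a) = D a k := funext (hfd a)
    rw [h1]
    exact (hasFDerivAt_D a k p).fderiv
  -- critical point characterization
  have hcrit : ∀ (a : ℝ) (y : Fin (n - 1) → ℝ),
      fderiv ℝ (g a) y = 0 ↔ ∀ i : Fin (n - 1), F' a k (i : ℕ) (y i) = 0 := by
    intro a y
    rw [hfd]
    constructor
    · intro h i
      have := congrArg (fun L : (Fin (n - 1) → ℝ) →L[ℝ] ℝ => L (Pi.single i 1)) h
      simpa [D_single] using this
    · intro h
      ext u
      rw [ContinuousLinearMap.zero_apply, D_apply]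
      simp [h]
  refine ⟨?_, ⟨?_, ?_⟩, ?_⟩
  · -- a < 0
    intro a ha y h
    have h0 := (hcrit a y).1 h i0
    unfold F' at h0
    simp only [hi0, if_true] at h0
    nlinarith [sq_nonneg (y i0)]
  · -- a = 0 : critical set = {0}
    ext y
    simp only [Set.mem_setOf_eq, Set.mem_singleton_iff]
    rw [hcrit]
    constructor
    · intro h
      funext i
      have hi := h i
      unfold F' at hi
      by_cases h0 : (i : ℕ) = 0
      · simp only [h0, if_true] at hi
        have : (y i) ^ 2 = 0 := by linarith
        have := pow_eq_zero_iff (n := 2) (by norm_num) |>.mp this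
        simpa using this
      · simp only [h0, if_false] at hi
        by_cases hk' : (i : ℕ) ≤ k
        · simp only [hk', if_true] at hi
          have : y i = 0 := by linarith
          simpa using this
        · simp only [hk', if_false] at hi
          have : y i = 0 := by linarith
          simpa using this
    · intro h i
      subst h
      unfold F'
      simp only [Pi.zero_apply]
      split_ifs <;> norm_num
  · -- degenerate Hessian at 0
    refine ⟨Pi.single i0 1, ?_, ?_⟩
    · intro h
      have := congrFun h i0
      simp at this
    · intro u
      rw [hsnd, B_apply]
      apply Finset.sum_eq_zero
      intro j _
      by_cases h0 : (j : ℕ) = 0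
      · unfold c2
        simp [h0]
      · have hj : j ≠ i0 := fun h => h0 (by rw [h])
        simp [Pi.single_apply, hj]
  · -- a > 0
    intro a ha pP pM hP hM
    have hsq : Real.sqrt a ^ 2 = a := Real.sq_sqrt ha.le
    have hpos : 0 < Real.sqrt a := Real.sqrt_pos.mpr ha
    have hPi0 : pP i0 = Real.sqrt a := by rw [hP]; norm_num
    have hMi0 : pM i0 = -Real.sqrt a := by rw [hM]; norm_num
    refine ⟨?_, ?_, ?_, ?_, ?_⟩
    · -- critical set
      ext y
      simp only [Set.mem_setOf_eq, Set.mem_insert_iff, Set.mem_singleton_iff]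
      rw [hcrit]
      constructor
      · intro h
        have h0 := h i0
        unfold F' at h0
        simp only [hi0, if_true] at h0
        have hrest : ∀ i : Fin (n - 1), (i : ℕ) ≠ 0 → y i = 0 := by
          intro i hi
          have hx := h i
          unfold F' at hx
          simp only [hi, if_false] at hx
          by_cases hk' : (i : ℕ) ≤ k
          · simp only [hk', if_true] at hx; linarith
          · simp only [hk', if_false] at hx; linarith
        have hfac : (y i0 - Real.sqrt a) * (y i0 + Real.sqrt a) = 0 := by
          nlinarith [hsq]
        rcases mul_eq_zero.mp hfac with hc | hc
        · left
          funext i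
          by_cases hh : (i : ℕ) = 0
          · have : i = i0 := Fin.ext hh
            rw [this, hP]
            simp only [hi0, if_true]
            linarith
          · rw [hP]; simp only [hh, if_false]; exact hrest i hh
        · right
          funext i
          by_cases hh : (i : ℕ) = 0
          · have : i = i0 := Fin.ext hh
            rw [this, hM]
            simp only [hi0, if_true]
            linarith
          · rw [hM]; simp only [hh, if_false]; exact hrest i hh
      · rintro (rfl | rfl) i <;> unfold F' <;> by_cases hh : (i : ℕ) = 0
        · rw [hP]; simp only [hh, if_true]; nlinarith [hsq]
        · rw [hP]; simp only [hh, if_false]; split_ifs <;> norm_num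
        · rw [hM]; simp only [hh, if_true]; nlinarith [hsq]
        · rw [hM]; simp only [hh, if_false]; split_ifs <;> norm_num
    · -- nondegenerate at pP
      intro v hv
      funext i
      have := hv (Pi.single i 1)
      rw [hsnd, B_single] at this
      unfold c2 at this
      by_cases hh : (i : ℕ) = 0
      · simp only [hh, if_true] at this
        have hi0eq : i = i0 := Fin.ext hh
        rw [hi0eq] at this ⊢
        rw [hPi0] at this
        have : v i0 = 0 := by
          have h6 : (6 : ℝ) * Real.sqrt a ≠ 0 := by positivity
          exact (mul_eq_zero.mp this).resolve_left h6
        simpa using this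
      · simp only [hh, if_false] at this
        by_cases hk' : (i : ℕ) ≤ k
        · simp only [hk', if_true] at this
          have : v i = 0 := by linarith
          simpa using this
        · simp only [hk', if_false] at this
          have : v i = 0 := by linarith
          simpa using this
    · -- nondegenerate at pM
      intro v hv
      funext i
      have := hv (Pi.single i 1)
      rw [hsnd, B_single] at this
      unfold c2 at this
      by_cases hh : (i : ℕ) = 0
      · simp only [hh, if_true] at this
        have hi0eq : i = i0 := Fin.ext hh
        rw [hi0eq] at this ⊢
        rw [hMi0] at this
        have : v i0 = 0 := by
          have h6 : (6 : ℝ) * -Real.sqrt a ≠ 0 := by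
            simp only [ne_eq, mul_eq_zero, neg_eq_zero]
            push_neg
            exact ⟨by norm_num, ne_of_gt hpos⟩
          exact (mul_eq_zero.mp this).resolve_left h6
        simpa using this
      · simp only [hh, if_false] at this
        by_cases hk' : (i : ℕ) ≤ k
        · simp only [hk', if_true] at this
          have : v i = 0 := by linarith
          simpa using this
        · simp only [hk', if_false] at this
          have : v i = 0 := by linarith
          simpa using this
    · -- value at pP
      rw [hg]
      have hz : ∀ j : Fin (n - 1),
          (if (j : ℕ) = 0 then 0 else if (j : ℕ) ≤ k then -(pP j) ^ 2 else (pP j) ^ 2) = 0 := by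
        intro j
        by_cases hh : (j : ℕ) = 0
        · simp [hh]
        · rw [hP]; simp [hh]
      rw [Finset.sum_congr rfl (fun j _ => hz j), Finset.sum_const_zero]
      have h1 : pP ⟨0, by omega⟩ = Real.sqrt a := by rw [hP]; norm_num
      rw [h1]
      have h3 : Real.sqrt a ^ 3 = a * Real.sqrt a := by
        rw [pow_succ, hsq]
      rw [h3]; ring
    · -- value at pM
      rw [hg]
      have hz : ∀ j : Fin (n - 1),
          (if (j : ℕ) = 0 then 0 else if (j : ℕ) ≤ k then -(pM j) ^ 2 else (pM j) ^ 2) = 0 := by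
        intro j
        by_cases hh : (j : ℕ) = 0
        · simp [hh]
        · rw [hM]; simp [hh]
      rw [Finset.sum_congr rfl (fun j _ => hz j), Finset.sum_const_zero]
      have h1 : pM ⟨0, by omega⟩ = -Real.sqrt a := by rw [hM]; norm_num
      rw [h1]
      have h3 : Real.sqrt a ^ 3 = a * Real.sqrt a := by
        rw [pow_succ, hsq]
      ring_nf
      rw [h3]
      ring
end
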